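/- arXiv:1212.2314 — 2 statements merged into one kernel-verified Lean document; each statement's English description precedes it below -/
import Mathlib

section
/- A pair of hypergraphs (H1,H2) with H1 ≤ H2 has a tree projection if, and only if, it has a minimal tree projection. -/
/-- A hypergraph, identified (as in the paper) with its finite set of
finite hyperedges; its nodes are the vertices occurring in some hyperedge. -/
structure Hypergraph' (α : Type*) where
  edges : Finset (Finset α)

namespace Hypergraph'

variable {α : Type*}

/-- The set of nodes of a hypergraph. -/
def nodes (H : Hypergraph' α) : Set α := {x | ∃ h ∈ H.edges, x ∈ h}

/-- `H1 ≤ H2`: every hyperedge of `H1` is contained in some hyperedge of `H2`. -/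
def HLe (H1 H2 : Hypergraph' α) : Prop := ∀ h1 ∈ H1.edges, ∃ h2 ∈ H2.edges, h1 ⊆ h2

/-- `H` is contained in `H'`. -/
def Contained (H H' : Hypergraph' α) : Prop :=
  ∀ h ∈ H.edges, h ∉ H'.edges → ∃ h' ∈ H'.edges, h' ∉ H.edges ∧ h ⊆ h'

/-- `H` is properly contained in `H'`. -/
def ProperlyContained (H H' : Hypergraph' α) : Prop := H.Contained H' ∧ H ≠ H'

/-- A hypergraph is reduced if no hyperedge is a proper subset of another one. -/
def Reduced (H : Hypergraph' α) : Prop := ∀ h ∈ H.edges, ∀ h' ∈ H.edges, ¬ h ⊂ h'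

end Hypergraph'

/-- The type of hyperedges of `H`. -/
abbrev Hyperedge {α : Type*} (H : Hypergraph' α) := {h : Finset α // h ∈ H.edges}

/-- A join tree for a hypergraph `H`: a tree whose vertices are the hyperedges of `H`
such that, for every node `X`, the hyperedges containing `X` induce a connected subtree. -/
structure JoinTree {α : Type*} (H : Hypergraph' α) where
  T : SimpleGraph (Hyperedge H)
  isTree : T.IsTree
  node_connected : ∀ X : α, (T.induce {h : Hyperedge H | X ∈ h.1}).Preconnected

/-- A hypergraph is acyclic iff it has a join tree. -/
def Hypergraph'.Acyclic {α : Type*} (H : Hypergraph' α) : Prop := Nonempty (JoinTree H)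

/-- `Ha` is a tree projection of `H1` w.r.t. `H2`. -/
def IsTreeProjection {α : Type*} (H1 H2 Ha : Hypergraph' α) : Prop :=
  Ha.Acyclic ∧ H1.HLe Ha ∧ Ha.HLe H2

/-- `Ha` is a minimal tree projection of `H1` w.r.t. `H2`. -/
def IsMinimalTreeProjection {α : Type*} (H1 H2 Ha : Hypergraph' α) : Prop :=
  IsTreeProjection H1 H2 Ha ∧
  ∀ Ha' : Hypergraph' α, IsTreeProjection H1 H2 Ha' → ¬ Ha'.ProperlyContained Ha

namespace Hypergraph'

variable {α : Type*}

/-- `X` is `[V]`-adjacent to `Y`: some hyperedge contains both outside of `V`. -/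
def Adj (H : Hypergraph' α) (V : Set α) (X Y : α) : Prop :=
  ∃ h ∈ H.edges, X ∈ h ∧ Y ∈ h ∧ X ∉ V ∧ Y ∉ V

/-- There is a `[V]`-path from `X` to `Y`. -/
def VPath (H : Hypergraph' α) (V : Set α) : α → α → Prop :=
  Relation.ReflTransGen (H.Adj V)

/-- The set `W` is `[V]`-connected. -/
def VConnected (H : Hypergraph' α) (V W : Set α) : Prop :=
  ∀ X ∈ W, ∀ Y ∈ W, H.VPath V X Y

/-- `C` is a `[V]`-component of `H`: a maximal `[V]`-connected nonempty subset
of `nodes(H) \ V`. -/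
def IsComponent (H : Hypergraph' α) (V C : Set α) : Prop :=
  C.Nonempty ∧ C ⊆ H.nodes \ V ∧ H.VConnected V C ∧
  ∀ C' : Set α, C ⊆ C' → C' ⊆ H.nodes \ V → H.VConnected V C' → C' = C

/-- The frontier `Fr(C,H)`: the union of all hyperedges meeting `C`. -/
def Fr (H : Hypergraph' α) (C : Set α) : Set α :=
  {x | ∃ h ∈ H.edges, x ∈ h ∧ ∃ y ∈ C, y ∈ h}

/-- The border `∂(C,H) = Fr(C,H) \ C`. -/
def border (H : Hypergraph' α) (C : Set α) : Set α := H.Fr C \ C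

/-- `X` `[V]`-touches the set `W`: `X` is `[∅]`-adjacent to some node `Z` from which
there is a `[V]`-path to some node of `W`. -/
def Touches (H : Hypergraph' α) (V : Set α) (X : α) (W : Set α) : Prop :=
  ∃ Z : α, H.Adj ∅ X Z ∧ ∃ Y ∈ W, H.VPath V Z Y

end Hypergraph'

namespace JoinTree

variable {α : Type*} {H : Hypergraph' α}

/-- The vertices of the subtree rooted at `h_s` when the join tree is rooted at
(the side of) `h_r`, for adjacent vertices `h_r`, `h_s`. -/
def subtreeVerts (JT : JoinTree H) (h_r h_s : Hyperedge H) : Set (Hyperedge H) :=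
  {v | JT.T.dist v h_s < JT.T.dist v h_r}

/-- The nodes occurring in the vertices of the subtree rooted at `h_s` (w.r.t. `h_r`). -/
def subtreeNodes (JT : JoinTree H) (h_r h_s : Hyperedge H) : Set α :=
  {x | ∃ v ∈ JT.subtreeVerts h_r h_s, x ∈ v.1}

/-- `h_s` is a child of `h_r` in the join tree rooted at `root`. -/
def IsChild (JT : JoinTree H) (root h_r h_s : Hyperedge H) : Prop :=
  JT.T.Adj h_r h_s ∧ JT.T.dist root h_r < JT.T.dist root h_s

end JoinTree

/-- The sub-hypergraph of `H1` induced by the node set `N` is `[∅]`-connected. -/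
def InducedConn {α : Type*} (H1 : Hypergraph' α) (N : Set α) : Prop :=
  ∀ X ∈ N, ∀ Y ∈ N,
    Relation.ReflTransGen
      (fun a b => a ∈ N ∧ b ∈ N ∧ ∃ h ∈ H1.edges, a ∈ h ∧ b ∈ h) X Y

/-- A join tree of `Ha` is `H1`-connected. -/
def JoinTree.IsConnectedFor {α : Type*} {Ha : Hypergraph' α} (JT : JoinTree Ha)
    (H1 : Hypergraph' α) : Prop :=
  ∀ h_r h_s : Hyperedge Ha, JT.T.Adj h_r h_s → InducedConn H1 (JT.subtreeNodes h_r h_s)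

/-- `C` is the component `C⊤(h)` associated with vertex `h` of the join tree rooted at
`root`: conventionally `nodes(H1)` for the root, and otherwise the unique
`[h_p]`-component of `H1` (for `h_p` the parent of `h`) determined by the subtree at `h`. -/
def CtopAt {α : Type*} (H1 : Hypergraph' α) {Ha : Hypergraph' α} (JT : JoinTree Ha)
    (root h : Hyperedge Ha) (C : Set α) : Prop :=
  (h = root ∧ C = H1.nodes) ∨
  ∃ h_p : Hyperedge Ha, JT.IsChild root h_p h ∧ H1.IsComponent (h_p.1 : Set α) C ∧
    JT.subtreeNodes h_p h = C ∪ ((h.1 : Set α) ∩ (h_p.1 : Set α))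

/-- The join tree `JT` of `Ha`, rooted at `root`, is an `H1`-component tree. -/
def JoinTree.IsComponentTreeFor {α : Type*} {Ha : Hypergraph' α} (JT : JoinTree Ha)
    (H1 : Hypergraph' α) (root : Hyperedge Ha) : Prop :=
  (∀ h_r h_s : Hyperedge Ha, JT.IsChild root h_r h_s →
    (∃! C : Set α, H1.IsComponent (h_r.1 : Set α) C ∧
      JT.subtreeNodes h_r h_s = C ∪ ((h_s.1 : Set α) ∩ (h_r.1 : Set α))) ∧
    (∀ C : Set α, H1.IsComponent (h_r.1 : Set α) C →
      JT.subtreeNodes h_r h_s = C ∪ ((h_s.1 : Set α) ∩ (h_r.1 : Set α)) →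
      ((h_s.1 : Set α) ∩ C).Nonempty ∧ (h_s.1 : Set α) ⊆ H1.Fr C)) ∧
  (∀ h_r : Hyperedge Ha, ∀ Ctop : Set α, CtopAt H1 JT root h_r Ctop →
    ∀ C_r : Set α, H1.IsComponent (h_r.1 : Set α) C_r → C_r ⊆ Ctop →
    ∃! h_s : Hyperedge Ha, JT.IsChild root h_r h_s ∧
      JT.subtreeNodes h_r h_s = C_r ∪ ((h_s.1 : Set α) ∩ (h_r.1 : Set α)))

/-! ### The Robber and Captain game -/

/-- A position for the Captain: a set of nodes included in some hyperedge of `H2`. -/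
def IsPosition {α : Type*} (H2 : Hypergraph' α) (M : Set α) : Prop :=
  ∃ h2 ∈ H2.edges, M ⊆ (h2 : Set α)

/-- A configuration of the game `R&C(H1,H2)`. -/
def IsConfig {α : Type*} (H1 H2 : Hypergraph' α) (M C : Set α) : Prop :=
  IsPosition H2 M ∧ (H1.IsComponent M C ∨ C = ∅ ∨ (M = ∅ ∧ C = H1.nodes))

/-- `C_j` is an `[(M_i,C_i),M_j]`-escape component: an `[M_j]`-component of `H1`
such that `C_i ∪ C_j` is `[M_i ∩ M_j]`-connected. -/
def EscapeComp {α : Type*} (H1 : Hypergraph' α) (M_i C_i M_j C_j : Set α) : Prop :=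
  H1.IsComponent M_j C_j ∧ H1.VConnected (M_i ∩ M_j) (C_i ∪ C_j)

/-- The escape door `ED((M_i,C),M') = ∂(C,H1) \ M'` (it only depends on `C` and `M'`). -/
def escapeDoor {α : Type*} (H1 : Hypergraph' α) (C M' : Set α) : Set α :=
  H1.border C \ M'

/-- `σ` is a strategy for the Captain in `R&C(H1,H2)`. -/
def IsStrategy {α : Type*} (H1 H2 : Hypergraph' α) (σ : Set α → Set α → Set α) : Prop :=
  ∀ M C : Set α, IsConfig H1 H2 M C → C ≠ ∅ →
    IsPosition H2 (σ M C) ∧ σ M C ⊆ H1.Fr C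

/-- One step of the game played according to `σ`: from configuration `p` the Captain
moves to `σ p.1 p.2`, and the Robber either selects an escape component or is captured. -/
def GameStep {α : Type*} (H1 : Hypergraph' α) (σ : Set α → Set α → Set α)
    (p q : Set α × Set α) : Prop :=
  p.2 ≠ ∅ ∧ q.1 = σ p.1 p.2 ∧
    (EscapeComp H1 p.1 p.2 q.1 q.2 ∨
      ((∀ C : Set α, ¬ EscapeComp H1 p.1 p.2 q.1 C) ∧ q.2 = ∅))

/-- `p` is a vertex of the game tree `T(σ)` (reachable from the root `(∅, nodes(H1))`). -/
def InGameTree {α : Type*} (H1 : Hypergraph' α) (σ : Set α → Set α → Set α)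
    (p : Set α × Set α) : Prop :=
  Relation.ReflTransGen (GameStep H1 σ) (∅, H1.nodes) p

/-- `σ` is winning: the game tree `T(σ)` is finite, i.e., there is no infinite play. -/
def Winning {α : Type*} (H1 : Hypergraph' α) (σ : Set α → Set α → Set α) : Prop :=
  ¬ ∃ f : ℕ → Set α × Set α, f 0 = (∅, H1.nodes) ∧ ∀ n, GameStep H1 σ (f n) (f (n + 1))

/-- `M_j` is a monotone move in `(M_i, C_i)`. -/
def MonotoneMove {α : Type*} (H1 : Hypergraph' α) (M_i C_i M_j : Set α) : Prop :=
  ∀ C : Set α, EscapeComp H1 M_i C_i M_j C → C ⊆ C_i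

/-- `σ` is a monotone strategy. -/
def MonotoneStrategy {α : Type*} (H1 : Hypergraph' α) (σ : Set α → Set α → Set α) : Prop :=
  ∀ p q : Set α × Set α, InGameTree H1 σ p → GameStep H1 σ p q →
    MonotoneMove H1 p.1 p.2 q.1


/-- A numeric measure on hypergraphs: `∑ (2^N+1)^|h|` over the hyperedges. -/
private def muTP {α : Type*} (N : ℕ) (H : Hypergraph' α) : ℕ :=
  ∑ h ∈ H.edges, (2 ^ N + 1) ^ h.card

private lemma muTP_aux (N c : ℕ) (hc : c ≤ N) :
    (2 ^ c - 1) * (2 ^ N + 1) ^ (c - 1) < (2 ^ N + 1) ^ c := by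
  cases c with
  | zero => simp
  | succ m =>
      have h1 : 2 ^ (m + 1) ≤ 2 ^ N := Nat.pow_le_pow_right (by norm_num) hc
      have h2 : (2 ^ (m + 1) - 1) < 2 ^ N + 1 :=
        lt_of_le_of_lt (le_trans (Nat.sub_le _ _) h1) (Nat.lt_succ_self _)
      calc (2 ^ (m + 1) - 1) * (2 ^ N + 1) ^ (m + 1 - 1)
          < (2 ^ N + 1) * (2 ^ N + 1) ^ m := by
            exact Nat.mul_lt_mul_of_lt_of_le h2 (le_of_eq rfl) (Nat.pow_pos (n := m) (by omega))
        _ = (2 ^ N + 1) ^ (m + 1) := (pow_succ' _ _).symm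

/-- The key lemma: if `H` is properly contained in `H'` and the hyperedges of `H'`
have cardinality at most `N`, then the measure strictly decreases. -/
private lemma muTP_lt_of_properlyContained {α : Type*} (N : ℕ) {H H' : Hypergraph' α}
    (hbd : ∀ h ∈ H'.edges, h.card ≤ N)
    (hpc : H.ProperlyContained H') : muTP N H < muTP N H' := by
  classical
  obtain ⟨hcont, hne⟩ := hpc
  set K := 2 ^ N + 1 with hKdef
  set A := H.edges \ H'.edges with hA
  set B := H'.edges \ H.edges with hB
  -- every edge of A lies strictly inside some edge of B
  have hf : ∀ h ∈ A, ∃ h' ∈ B, h ⊂ h' := by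
    intro h hh
    rw [hA, Finset.mem_sdiff] at hh
    obtain ⟨h', hh'1, hh'2, hsub⟩ := hcont h hh.1 hh.2
    refine ⟨h', ?_, ?_⟩
    · rw [hB, Finset.mem_sdiff]; exact ⟨hh'1, hh'2⟩
    · refine ⟨hsub, fun hsub' => hh'2 ?_⟩
      have : h = h' := Finset.Subset.antisymm hsub hsub'
      exact this ▸ hh.1
  -- B is nonempty
  have hBne : B.Nonempty := by
    by_cases hAne : A.Nonempty
    · obtain ⟨h, hh⟩ := hAne
      obtain ⟨h', hh', _⟩ := hf h hh
      exact ⟨h', hh'⟩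
    · rw [Finset.not_nonempty_iff_eq_empty, hA, Finset.sdiff_eq_empty_iff_subset] at hAne
      rw [Finset.nonempty_iff_ne_empty, hB, Ne, Finset.sdiff_eq_empty_iff_subset]
      intro hsub
      have hEq : H.edges = H'.edges := Finset.Subset.antisymm hAne hsub
      exact hne (by cases H; cases H'; simpa using hEq)
  -- a choice function mapping A into B
  have hg : ∃ g : Finset α → Finset α, ∀ h ∈ A, g h ∈ B ∧ h ⊂ g h := by
    refine ⟨fun h => if hh : h ∈ A then (hf h hh).choose else ∅, fun h hh => ?_⟩
    simp only [dif_pos hh]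
    exact ⟨(hf h hh).choose_spec.1, (hf h hh).choose_spec.2⟩
  obtain ⟨g, hgspec⟩ := hg
  -- sum over A, grouped by fiber of g
  have hfib : ∑ h' ∈ B, ∑ h ∈ A.filter (fun h => g h = h'), K ^ h.card
      = ∑ h ∈ A, K ^ h.card :=
    Finset.sum_fiberwise_of_maps_to (fun h hh => (hgspec h hh).1) _
  -- bound each fiber sum
  have hfibbd : ∀ h' ∈ B, ∑ h ∈ A.filter (fun h => g h = h'), K ^ h.card < K ^ h'.card := by
    intro h' hh'
    have hcard : h'.card ≤ N := hbd h' (by rw [hB, Finset.mem_sdiff] at hh'; exact hh'.1)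
    have hsub : A.filter (fun h => g h = h') ⊆ h'.powerset.erase h' := by
      intro h hh
      rw [Finset.mem_filter] at hh
      have hss : h ⊂ h' := hh.2 ▸ (hgspec h hh.1).2
      rw [Finset.mem_erase, Finset.mem_powerset]
      exact ⟨hss.ne, hss.subset⟩
    calc ∑ h ∈ A.filter (fun h => g h = h'), K ^ h.card
        ≤ ∑ h ∈ h'.powerset.erase h', K ^ h.card :=
          Finset.sum_le_sum_of_subset hsub
      _ ≤ (h'.powerset.erase h').card • K ^ (h'.card - 1) := by
          refine Finset.sum_le_card_nsmul _ _ _ (fun x hx => ?_)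
          rw [Finset.mem_erase, Finset.mem_powerset] at hx
          have hxss : x ⊂ h' := ⟨hx.2, fun h => hx.1 (Finset.Subset.antisymm hx.2 h)⟩
          have hx1 : x.card < h'.card := Finset.card_lt_card hxss
          exact Nat.pow_le_pow_right (Nat.le_add_left 1 _) (by omega)
      _ = (2 ^ h'.card - 1) * K ^ (h'.card - 1) := by
          rw [Finset.card_erase_of_mem (Finset.mem_powerset_self h'),
            Finset.card_powerset, smul_eq_mul]
      _ < K ^ h'.card := muTP_aux N h'.card hcard
  have hAB : ∑ h ∈ A, K ^ h.card < ∑ h' ∈ B, K ^ h'.card := by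
    rw [← hfib]
    exact Finset.sum_lt_sum_of_nonempty hBne hfibbd
  -- assemble
  have hsplit : ∀ s t : Finset (Finset α),
      ∑ h ∈ s, K ^ h.card = ∑ h ∈ s ∩ t, K ^ h.card + ∑ h ∈ s \ t, K ^ h.card := by
    intro s t
    rw [Finset.sum_inter_add_sum_sdiff]
  have h1 : muTP N H = ∑ h ∈ H.edges ∩ H'.edges, K ^ h.card + ∑ h ∈ A, K ^ h.card := by
    rw [muTP, hsplit H.edges H'.edges, hA]
  have h2 : muTP N H' = ∑ h ∈ H.edges ∩ H'.edges, K ^ h.card + ∑ h ∈ B, K ^ h.card := by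
    rw [muTP, hsplit H'.edges H.edges, hB, Finset.inter_comm]
  omega

theorem exists_tp_iff_exists_minimal_tp {α : Type*} (H1 H2 : Hypergraph' α)
    (hle : H1.HLe H2) :
    (∃ Ha : Hypergraph' α, IsTreeProjection H1 H2 Ha) ↔
      (∃ Ha : Hypergraph' α, IsMinimalTreeProjection H1 H2 Ha) := by
  constructor
  · rintro ⟨Ha, hTP⟩
    classical
    set N := H2.edges.sup Finset.card with hN
    have hbd : ∀ H' : Hypergraph' α, IsTreeProjection H1 H2 H' →
        ∀ h ∈ H'.edges, h.card ≤ N := by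
      intro H' hTP' h hh
      obtain ⟨h2, hh2, hsub⟩ := hTP'.2.2 h hh
      exact le_trans (Finset.card_le_card hsub) (Finset.le_sup hh2)
    have hP : ∃ n : ℕ, ∃ H' : Hypergraph' α, IsTreeProjection H1 H2 H' ∧ muTP N H' = n :=
      ⟨muTP N Ha, Ha, hTP, rfl⟩
    obtain ⟨H₀, hTP₀, hmu₀⟩ := Nat.find_spec hP
    refine ⟨H₀, hTP₀, fun Ha' hTP' hPC => ?_⟩
    have hlt : muTP N Ha' < muTP N H₀ :=
      muTP_lt_of_properlyContained N (hbd H₀ hTP₀) hPC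
    have := Nat.find_min hP (m := muTP N Ha') (by omega)
    exact this ⟨Ha', hTP', rfl⟩
  · rintro ⟨Ha, hMin⟩
    exact ⟨Ha, hMin.1⟩
end

section
/- Every minimal tree projection is a reduced hypergraph, i.e., no hyperedge of a minimal tree projection is a proper subset of another of its hyperedges. -/
open SimpleGraph

private lemma reach_map {V W : Type*} {G : SimpleGraph V} {G' : SimpleGraph W} (f : V → W)
    (hf : ∀ u v, G.Adj u v → f u = f v ∨ G'.Adj (f u) (f v)) {u v : V}
    (h : G.Reachable u v) : G'.Reachable (f u) (f v) := by
  obtain ⟨w⟩ := h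
  induction w with
  | nil => exact Reachable.refl _
  | @cons a b c ha p ih =>
    rcases hf _ _ ha with he | ha'
    · exact he ▸ ih
    · exact ha'.reachable.trans ih

private lemma erase_acyclic {α : Type*} [DecidableEq (Finset α)]
    (Ha : Hypergraph' α) (JT : JoinTree Ha)
    {h h' : Finset α} (mh : h ∈ Ha.edges) (mh' : h' ∈ Ha.edges) (hss : h ⊂ h') :
    Hypergraph'.Acyclic ⟨Ha.edges.erase h⟩ := by
  set T := JT.T with hTdef
  set hv : Hyperedge Ha := ⟨h, mh⟩ with hhv
  set hv' : Hyperedge Ha := ⟨h', mh'⟩ with hhv'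
  have hne : hv ≠ hv' := fun e => hss.ne (congrArg Subtype.val e)
  obtain ⟨w0⟩ := JT.isTree.1 hv hv'
  have hp0 : w0.bypass.IsPath := w0.bypass_isPath
  have np0 : ¬ w0.bypass.Nil := SimpleGraph.Walk.not_nil_of_ne hne
  set g : Hyperedge Ha := w0.bypass.getVert 1 with hgdef
  have hadj : T.Adj hv g := w0.bypass.adj_snd np0
  have hgp0 : g ∈ w0.bypass.support := by
    rw [← w0.bypass.cons_support_tail np0]
    exact List.mem_cons_of_mem _ w0.bypass.tail.start_mem_support
  have hgne : g ≠ hv := hadj.ne'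
  -- key: every node of h is in g
  have hkey : ∀ X ∈ h, X ∈ g.1 := by
    intro X hX
    have hX' : X ∈ h' := hss.subset hX
    obtain ⟨w⟩ := JT.node_connected X ⟨hv, hX⟩ ⟨hv', hX'⟩
    have hsupp : ∀ v ∈ (w.map (SimpleGraph.Embedding.induce
        {v : Hyperedge Ha | X ∈ v.1}).toHom).support, X ∈ v.1 := by
      intro v hvmem
      rw [SimpleGraph.Walk.support_map] at hvmem
      obtain ⟨u, hu, rfl⟩ := List.mem_map.mp hvmem
      exact u.2
    set w1 := w.map (SimpleGraph.Embedding.induce {v : Hyperedge Ha | X ∈ v.1}).toHom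
    have heq : (⟨w0.bypass, hp0⟩ : T.Path hv hv') = ⟨w1.bypass, w1.bypass_isPath⟩ :=
      JT.isTree.2.path_unique _ _
    have hb : w0.bypass = w1.bypass := congrArg Subtype.val heq
    exact hsupp g (w1.support_bypass_subset (hb ▸ hgp0))
  -- the new vertex type
  have hg1ne : g.1 ≠ h := fun e => hgne (Subtype.ext e)
  set V' := Hyperedge (⟨Ha.edges.erase h⟩ : Hypergraph' α) with hV'
  set g' : V' := ⟨g.1, Finset.mem_erase.2 ⟨hg1ne, g.2⟩⟩ with hg'
  set ι : V' → Hyperedge Ha := fun v => ⟨v.1, Finset.mem_of_mem_erase v.2⟩ with hι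
  have ιinj : Function.Injective ι := by
    intro a b e
    rw [hι] at e
    exact Subtype.ext (by simpa using congrArg Subtype.val e)
  have ιnh : ∀ v : V', ι v ≠ hv := by
    intro v e
    exact (Finset.mem_erase.1 v.2).1 (congrArg Subtype.val e)
  -- the auxiliary graph U on the old vertices
  set U : SimpleGraph (Hyperedge Ha) :=
    { Adj := fun u v => u ≠ v ∧ (T.Adj u v ∨ (T.Adj u hv ∧ v = g) ∨ (u = g ∧ T.Adj hv v)),
      symm := ⟨by
        rintro u v ⟨huv, ha | ⟨h1, h2⟩ | ⟨h1, h2⟩⟩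
        · exact ⟨huv.symm, Or.inl ha.symm⟩
        · exact ⟨huv.symm, Or.inr (Or.inr ⟨h2, h1.symm⟩)⟩
        · exact ⟨huv.symm, Or.inr (Or.inl ⟨h2.symm, h1⟩)⟩⟩
      loopless := ⟨fun v hloop => hloop.1 rfl⟩ } with hU
  set T' : SimpleGraph V' := U.comap ι with hT'
  -- no cycles in U avoiding hv
  have noCycle : ∀ (u : Hyperedge Ha) (c : U.Walk u u), c.IsCycle → hv ∉ c.support → False := by
    intro u c hc hns
    by_cases hgmem : g ∈ c.support
    · -- rotate to start at g
      have hc2 : (c.rotate g hgmem).IsCycle := hc.rotate hgmem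
      have hns2 : hv ∉ (c.rotate g hgmem).support := by
        intro hmem
        rw [(c.rotate g hgmem).support_eq_cons] at hmem
        rcases List.mem_cons.1 hmem with hmem | hmem
        · exact hgne hmem.symm
        · exact hns (List.mem_of_mem_tail
            (((c.support_rotate g hgmem).mem_iff).1 hmem))
      have h3 := hc2.three_le_length
      cases hrot : c.rotate g hgmem with
      | nil => rw [hrot] at hc2; exact hc2.ne_nil rfl
      | @cons _ x _ hgx rest =>
        rw [hrot] at hc2 hns2 h3
        rw [SimpleGraph.Walk.cons_isCycle_iff] at hc2
        obtain ⟨restP, hedge⟩ := hc2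
        rw [SimpleGraph.Walk.support_cons] at hns2
        have hnsr : hv ∉ rest.support := fun m => hns2 (List.mem_cons_of_mem _ m)
        rw [SimpleGraph.Walk.length_cons] at h3
        have hxg : x ≠ g := by
          intro e
          subst e
          rw [SimpleGraph.Walk.isPath_iff_eq_nil.1 restP] at h3
          simp at h3
        have rpP : rest.reverse.IsPath := restP.reverse
        cases hrev : rest.reverse with
        | nil => exact hxg rfl
        | @cons _ y _ hgy mid =>
          rw [hrev] at rpP
          rw [SimpleGraph.Walk.cons_isPath_iff] at rpP
          obtain ⟨midP, hgm⟩ := rpP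
          have hhm : hv ∉ mid.support := by
            intro m
            apply hnsr
            have : hv ∈ rest.reverse.support := by
              rw [hrev, SimpleGraph.Walk.support_cons]
              exact List.mem_cons_of_mem _ m
            rw [SimpleGraph.Walk.support_reverse] at this
            exact List.mem_reverse.1 this
          have hyg : y ≠ g := fun e => hgm (e ▸ mid.start_mem_support)
          have hyhv : y ≠ hv := fun e => hhm (e ▸ mid.start_mem_support)
          have hxhv : x ≠ hv := fun e => hhm (e ▸ mid.end_mem_support)
          have hrl : rest.length = mid.length + 1 := by
            rw [← SimpleGraph.Walk.length_reverse, hrev, SimpleGraph.Walk.length_cons]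
          have hyx : y ≠ x := by
            intro e
            subst e
            rw [SimpleGraph.Walk.isPath_iff_eq_nil.1 midP] at hrl
            rw [hrl] at h3
            simp at h3
          -- mid transfers to T
          have hTm : ∀ e ∈ mid.edges, e ∈ T.edgeSet := by
            intro e he
            revert he
            refine Sym2.ind (fun a b he => ?_) e
            have hUa : U.Adj a b := mid.adj_of_mem_edges he
            rcases hUa.2 with ha | ⟨h1, h2⟩ | ⟨h1, h2⟩
            · exact ha
            · exact absurd (h2 ▸ mid.snd_mem_support_of_mem_edges he) hgm
            · exact absurd (h1 ▸ mid.fst_mem_support_of_mem_edges he) hgm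
          have midTP : (mid.transfer T hTm).IsPath := midP.transfer hTm
          have hgmT : g ∉ (mid.transfer T hTm).support := by
            rw [SimpleGraph.Walk.support_transfer]; exact hgm
          have hhmT : hv ∉ (mid.transfer T hTm).support := by
            rw [SimpleGraph.Walk.support_transfer]; exact hhm
          have uniq : ∀ (w2 : T.Walk y x), w2.IsPath →
              w2.support = (mid.transfer T hTm).support := by
            intro w2 hw2
            have := JT.isTree.2.path_unique ⟨w2, hw2⟩ ⟨mid.transfer T hTm, midTP⟩
            exact congrArg (fun p : T.Path y x => (p : T.Walk y x).support) this
          have hgx2 : T.Adj g x ∨ T.Adj hv x := by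
            rcases hgx.2 with ha | ⟨h1, h2⟩ | ⟨h1, h2⟩
            · exact Or.inl ha
            · exact absurd h2 hxg
            · exact Or.inr h2
          have hgy2 : T.Adj g y ∨ T.Adj hv y := by
            rcases hgy.2 with ha | ⟨h1, h2⟩ | ⟨h1, h2⟩
            · exact Or.inl ha
            · exact absurd h2 hyg
            · exact Or.inr h2
          rcases hgy2 with hy' | hy' <;> rcases hgx2 with hx' | hx'
          · -- y–g–x
            have hP : (SimpleGraph.Walk.cons hy'.symm
                (SimpleGraph.Walk.cons hx' SimpleGraph.Walk.nil)).IsPath := by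
              rw [SimpleGraph.Walk.isPath_def]
              simp [hyg, Ne.symm hyg, hyx, Ne.symm hyx, hyhv, Ne.symm hyhv, hgne, Ne.symm hgne, hxg, Ne.symm hxg, hxhv, Ne.symm hxhv]
            have hs := uniq _ hP
            apply hgmT
            rw [← hs]
            simp
          · -- y–g–hv–x
            have hP : (SimpleGraph.Walk.cons hy'.symm (SimpleGraph.Walk.cons hadj.symm
                (SimpleGraph.Walk.cons hx' SimpleGraph.Walk.nil))).IsPath := by
              rw [SimpleGraph.Walk.isPath_def]
              simp [hyg, Ne.symm hyg, hyx, Ne.symm hyx, hyhv, Ne.symm hyhv, hgne, Ne.symm hgne, hxg, Ne.symm hxg, hxhv, Ne.symm hxhv]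
            have hs := uniq _ hP
            apply hgmT
            rw [← hs]
            simp
          · -- y–hv–g–x
            have hP : (SimpleGraph.Walk.cons hy'.symm (SimpleGraph.Walk.cons hadj
                (SimpleGraph.Walk.cons hx' SimpleGraph.Walk.nil))).IsPath := by
              rw [SimpleGraph.Walk.isPath_def]
              simp [hyg, Ne.symm hyg, hyx, Ne.symm hyx, hyhv, Ne.symm hyhv, hgne, Ne.symm hgne, hxg, Ne.symm hxg, hxhv, Ne.symm hxhv]
            have hs := uniq _ hP
            apply hgmT
            rw [← hs]
            simp
          · -- y–hv–x
            have hP : (SimpleGraph.Walk.cons hy'.symm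
                (SimpleGraph.Walk.cons hx' SimpleGraph.Walk.nil)).IsPath := by
              rw [SimpleGraph.Walk.isPath_def]
              simp [hyg, Ne.symm hyg, hyx, Ne.symm hyx, hyhv, Ne.symm hyhv, hgne, Ne.symm hgne, hxg, Ne.symm hxg, hxhv, Ne.symm hxhv]
            have hs := uniq _ hP
            apply hhmT
            rw [← hs]
            simp
    · -- all edges are T-edges: contradiction with T acyclic
      have hTc : ∀ e ∈ c.edges, e ∈ T.edgeSet := by
        intro e he
        revert he
        refine Sym2.ind (fun a b he => ?_) e
        have hUa : U.Adj a b := c.adj_of_mem_edges he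
        rcases hUa.2 with ha | ⟨h1, h2⟩ | ⟨h1, h2⟩
        · exact ha
        · exact absurd (h2 ▸ c.snd_mem_support_of_mem_edges he) hgmem
        · exact absurd (h1 ▸ c.fst_mem_support_of_mem_edges he) hgmem
      rw [SimpleGraph.Walk.isCycle_def, SimpleGraph.Walk.isTrail_def] at hc
      refine JT.isTree.2 (c.transfer T hTc) ?_
      rw [SimpleGraph.Walk.isCycle_def, SimpleGraph.Walk.isTrail_def,
        SimpleGraph.Walk.edges_transfer, SimpleGraph.Walk.support_transfer]
      refine ⟨hc.1, ?_, hc.2.2⟩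
      intro hnil
      apply hc.2.1
      cases c with
      | nil => rfl
      | cons hadj p => exact absurd (congrArg SimpleGraph.Walk.length hnil) (by simp; exact SimpleGraph.Walk.not_nil_cons)
  -- the map back
  set φ : Hyperedge Ha → V' :=
    fun v => if hw : v.1 = h then g' else ⟨v.1, Finset.mem_erase.2 ⟨hw, v.2⟩⟩ with hφ
  have hφh : ∀ v : Hyperedge Ha, v.1 = h → φ v = g' := by
    intro v hw; rw [hφ]; exact dif_pos hw
  have hφn : ∀ v : Hyperedge Ha, (hw : v.1 ≠ h) →
      φ v = ⟨v.1, Finset.mem_erase.2 ⟨hw, v.2⟩⟩ := by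
    intro v hw; rw [hφ]; exact dif_neg hw
  have hιφ : ∀ v : Hyperedge Ha, v.1 ≠ h → ι (φ v) = v := by
    intro v hw
    rw [hφn v hw]
    try exact Subtype.ext rfl
  have hφι : ∀ a : V', φ (ι a) = a := by
    intro a
    have ha : (ι a).1 ≠ h := (Finset.mem_erase.1 a.2).1
    rw [hφn _ ha]
    try exact Subtype.ext rfl
  have hf1 : ∀ u v : Hyperedge Ha, T.Adj u v → φ u = φ v ∨ T'.Adj (φ u) (φ v) := by
    intro u v a
    by_cases hu : u.1 = h
    · by_cases hvv : v.1 = h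
      · exact absurd (Subtype.ext (hu.trans hvv.symm)) a.ne
      · have hueq : u = hv := Subtype.ext hu
        by_cases hvg : v = g
        · left
          rw [hφh u hu, hφn v hvv]
          exact Subtype.ext (show g.1 = v.1 from (congrArg Subtype.val hvg).symm)
        · right
          have e1 : ι (φ u) = g := by rw [hφh u hu]; try exact Subtype.ext rfl
          have e2 : ι (φ v) = v := hιφ v hvv
          have hadjU : U.Adj g v := ⟨fun e => hvg e.symm, Or.inr (Or.inr ⟨rfl, hueq ▸ a⟩)⟩
          have h2 : U.Adj (ι (φ u)) (ι (φ v)) := by rw [e1, e2]; exact hadjU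
          exact h2
    · by_cases hvv : v.1 = h
      · have hveq : v = hv := Subtype.ext hvv
        by_cases hug : u = g
        · left
          rw [hφh v hvv, hφn u hu]
          exact Subtype.ext (show u.1 = g.1 from congrArg Subtype.val hug)
        · right
          have e1 : ι (φ v) = g := by rw [hφh v hvv]; try exact Subtype.ext rfl
          have e2 : ι (φ u) = u := hιφ u hu
          have hadjU : U.Adj u g := ⟨hug, Or.inr (Or.inl ⟨hveq ▸ a, rfl⟩)⟩
          have h2 : U.Adj (ι (φ u)) (ι (φ v)) := by rw [e1, e2]; exact hadjU
          exact h2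
      · right
        have hadjU : U.Adj u v := ⟨a.ne, Or.inl a⟩
        have h2 : U.Adj (ι (φ u)) (ι (φ v)) := by rw [hιφ u hu, hιφ v hvv]; exact hadjU
        exact h2
  -- T' is connected
  have conn : T'.Connected := by
    haveI : Nonempty V' := ⟨g'⟩
    constructor
    intro a b
    have r := JT.isTree.1.preconnected (ι a) (ι b)
    have r2 := reach_map φ hf1 r
    rwa [hφι a, hφι b] at r2
  -- T' is acyclic
  have acyc : T'.IsAcyclic := by
    intro a c hcyc
    let homι : T' →g U := ⟨ι, fun {a b} hab => hab⟩
    have hinj : Function.Injective (homι : T' →g U) := ιinj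
    have hcU : (c.map homι).IsCycle :=
      (SimpleGraph.Walk.map_isCycle_iff_of_injective hinj).2 hcyc
    have hnU : hv ∉ (c.map homι).support := by
      rw [SimpleGraph.Walk.support_map]
      intro m
      obtain ⟨b, _, hb⟩ := List.mem_map.1 m
      exact ιnh b hb
    exact noCycle _ _ hcU hnU
  -- node-connectivity
  have hfmem : ∀ (X : α) (u : Hyperedge Ha), X ∈ u.1 → X ∈ (φ u).1 := by
    intro X u hXu
    by_cases hu : u.1 = h
    · rw [hφh u hu]
      exact hkey X (hu ▸ hXu)
    · rw [hφn u hu]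
      exact hXu
  have nodeConn : ∀ X : α, (T'.induce {v : V' | X ∈ v.1}).Preconnected := by
    intro X a b
    have hf2 : ∀ u v : {v : Hyperedge Ha | X ∈ v.1},
        (T.induce {v : Hyperedge Ha | X ∈ v.1}).Adj u v →
        (fun u : {v : Hyperedge Ha | X ∈ v.1} =>
          (⟨φ u.1, hfmem X u.1 u.2⟩ : {v : V' | X ∈ v.1})) u =
        (fun u : {v : Hyperedge Ha | X ∈ v.1} =>
          (⟨φ u.1, hfmem X u.1 u.2⟩ : {v : V' | X ∈ v.1})) v ∨
        (T'.induce {v : V' | X ∈ v.1}).Adj ⟨φ u.1, hfmem X u.1 u.2⟩ ⟨φ v.1, hfmem X v.1 v.2⟩ := by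
      intro u v a2
      have ha' : T.Adj u.1 v.1 := a2
      rcases hf1 u.1 v.1 ha' with he | hadj2
      · exact Or.inl (Subtype.ext he)
      · exact Or.inr hadj2
    have r := JT.node_connected X ⟨ι a.1, a.2⟩ ⟨ι b.1, b.2⟩
    have r2 := reach_map _ hf2 r
    have ea : (⟨φ (ι a.1), hfmem X (ι a.1) a.2⟩ : {v : V' | X ∈ v.1}) = a :=
      Subtype.ext (hφι a.1)
    have eb : (⟨φ (ι b.1), hfmem X (ι b.1) b.2⟩ : {v : V' | X ∈ v.1}) = b :=
      Subtype.ext (hφι b.1)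
    rwa [ea, eb] at r2
  exact ⟨{ T := T', isTree := ⟨conn, acyc⟩, node_connected := nodeConn }⟩

theorem minimal_tp_reduced {α : Type*} (H1 H2 Ha : Hypergraph' α)
    (hmin : IsMinimalTreeProjection H1 H2 Ha) : Ha.Reduced := by
  classical
  intro e he e' he' hss
  obtain ⟨hacyc0, hle1, hle2⟩ := hmin.1
  obtain ⟨JT⟩ := hacyc0
  have hacyc := erase_acyclic Ha JT he he' hss
  have htp : IsTreeProjection H1 H2 ⟨Ha.edges.erase e⟩ := by
    refine ⟨hacyc, ?_, ?_⟩
    · intro e1 he1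
      obtain ⟨f, hf, hef⟩ := hle1 e1 he1
      by_cases hfe : f = e
      · exact ⟨e', Finset.mem_erase.2 ⟨fun q => hss.ne q.symm, he'⟩,
          (hfe ▸ hef).trans hss.subset⟩
      · exact ⟨f, Finset.mem_erase.2 ⟨hfe, hf⟩, hef⟩
    · intro e1 he1
      exact hle2 e1 (Finset.mem_of_mem_erase he1)
  refine hmin.2 ⟨Ha.edges.erase e⟩ htp ⟨?_, ?_⟩
  · intro e1 he1 hne1
    exact absurd (Finset.mem_of_mem_erase he1) hne1
  · intro q
    have : e ∈ (⟨Ha.edges.erase e⟩ : Hypergraph' α).edges := by rw [q]; exact he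
    exact Finset.notMem_erase e Ha.edges this
end
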